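/- arXiv:2604.26550 — 3 statements merged into one kernel-verified Lean document; each statement's English description precedes it below -/
import Mathlib

section
/- Let G be a connected weighted graph on n ≥ 2 vertices with Laplacian L_G, and let H be a weighted graph on the same vertices whose Laplacian L_H makes it a (1±ε)-spectral sparsifier of G with 0 ≤ ε < 1. Let γ > 0, l ≥ 1, S ⊆ {1,…,n}, and assume lγ(1−ε)λ₁ > 1. Then the linear map from F to F given by f ↦ P_F((lγ·L_H + I_S)·f) is bijective, and its inverse has operator norm at most 1/(lγ(1−ε)λ₁ − 1); equivalently, for every z ∈ ℝⁿ there is a unique g ∈ F with P_F((lγ·L_H + I_S)·g) = P_F z, and it satisfies ‖g‖₂ ≤ ‖P_F z‖₂/(lγ(1−ε)λ₁ − 1). -/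
open Matrix BigOperators Finset
open scoped Classical

noncomputable section

/-- The Laplacian of a weighted graph given by its adjacency matrix. -/
def Lap {n : ℕ} (A : Matrix (Fin n) (Fin n) ℝ) : Matrix (Fin n) (Fin n) ℝ :=
  Matrix.diagonal (fun i => ∑ j, A i j) - A

/-- `A` is a weighted graph adjacency matrix: symmetric, nonnegative, zero diagonal. -/
def IsWeightedGraph {n : ℕ} (A : Matrix (Fin n) (Fin n) ℝ) : Prop :=
  A.IsSymm ∧ (∀ i j, 0 ≤ A i j) ∧ (∀ i, A i i = 0)

/-- The graph with edge set `{(i,j) : A i j > 0}` is connected. -/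
def GraphConnected {n : ℕ} (A : Matrix (Fin n) (Fin n) ℝ) : Prop :=
  (SimpleGraph.fromRel (fun i j => 0 < A i j)).Connected

/-- `LH` is the Laplacian of a `(1±ε)`-spectral sparsifier of the graph with Laplacian `LG`. -/
def IsSparsifier {n : ℕ} (LG LH : Matrix (Fin n) (Fin n) ℝ) (ε : ℝ) : Prop :=
  ∀ x : Fin n → ℝ,
    (1 - ε) * (x ⬝ᵥ LG.mulVec x) ≤ x ⬝ᵥ LH.mulVec x ∧
    x ⬝ᵥ LH.mulVec x ≤ (1 + ε) * (x ⬝ᵥ LG.mulVec x)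

/-- Orthogonal projection `I - (1/n)·1·1ᵀ` onto `F = {f : ⟨f,1⟩ = 0}`. -/
def PF (n : ℕ) : Matrix (Fin n) (Fin n) ℝ :=
  1 - (n : ℝ)⁻¹ • Matrix.of (fun _ _ => (1 : ℝ))

/-- Diagonal 0/1 matrix selecting the coordinates in `S`. -/
def IS {n : ℕ} (S : Finset (Fin n)) : Matrix (Fin n) (Fin n) ℝ :=
  Matrix.diagonal (fun i => if i ∈ S then (1 : ℝ) else 0)

/-- Euclidean norm of a vector. -/
def vnorm {n : ℕ} (x : Fin n → ℝ) : ℝ := Real.sqrt (∑ i, (x i) ^ 2)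

/-- `lam` is the smallest eigenvalue of `L` restricted to `F = {x : ⟨x,1⟩ = 0}`, i.e. the
minimum of the Rayleigh quotient over nonzero vectors of `F`. -/
def IsLam1 {n : ℕ} (L : Matrix (Fin n) (Fin n) ℝ) (lam : ℝ) : Prop :=
  IsLeast {r | ∃ x : Fin n → ℝ, x ≠ 0 ∧ (∑ i, x i) = 0 ∧
    r = (x ⬝ᵥ L.mulVec x) / (∑ i, (x i) ^ 2)} lam

/-- `lam` is the largest eigenvalue of `L`: the maximum of the Rayleigh quotient. -/
def IsLamN {n : ℕ} (L : Matrix (Fin n) (Fin n) ℝ) (lam : ℝ) : Prop :=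
  IsGreatest {r | ∃ x : Fin n → ℝ, x ≠ 0 ∧
    r = (x ⬝ᵥ L.mulVec x) / (∑ i, (x i) ^ 2)} lam

/-- `Lp` is the Moore–Penrose pseudoinverse of `L`. -/
def IsMoorePenrose {n : ℕ} (L Lp : Matrix (Fin n) (Fin n) ℝ) : Prop :=
  L * Lp * L = L ∧ Lp * L * Lp = Lp ∧ (L * Lp).IsSymm ∧ (Lp * L).IsSymm

/-- The stability constant `β` of sparse-HFS. -/
def betaHFS (l : ℕ) (γ ε lam1 k : ℝ) : ℝ :=
  1.5 * k * Real.sqrt l / ((l : ℝ) * γ * (1 - ε) * lam1 - 1) ^ 2 +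
  Real.sqrt 2 * k / ((l : ℝ) * γ * (1 - ε) * lam1 - 1)

/-- `π(l,u) = (lu/(l+u-0.5))·(1/(1 - 1/(2·max{l,u})))`. -/
def piLU (l u : ℕ) : ℝ :=
  ((l : ℝ) * u / ((l : ℝ) + u - 0.5)) * (1 / (1 - 1 / (2 * ((max l u : ℕ) : ℝ))))

lemma PF_mulVec_apply {n : ℕ} (x : Fin n → ℝ) (i : Fin n) :
    (PF n).mulVec x i = x i - (n:ℝ)⁻¹ * ∑ j, x j := by
  simp [PF, Matrix.mulVec, dotProduct, Matrix.one_apply, sub_mul, ite_mul,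
    Finset.sum_sub_distrib, Finset.mul_sum]

lemma sum_PF {n : ℕ} (hn : (n:ℝ) ≠ 0) (x : Fin n → ℝ) :
    ∑ i, (PF n).mulVec x i = 0 := by
  simp only [PF_mulVec_apply]
  rw [Finset.sum_sub_distrib]
  simp [Finset.sum_const, Finset.card_univ]
  field_simp
  ring

lemma dot_PF {n : ℕ} {g : Fin n → ℝ} (hg : ∑ i, g i = 0) (y : Fin n → ℝ) :
    g ⬝ᵥ (PF n).mulVec y = g ⬝ᵥ y := by
  simp only [dotProduct, PF_mulVec_apply, mul_sub]
  rw [Finset.sum_sub_distrib, ← Finset.sum_mul]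
  rw [hg]; ring_nf

def sumLM (n : ℕ) : (Fin n → ℝ) →ₗ[ℝ] ℝ where
  toFun x := ∑ i, x i
  map_add' x y := by simp [Finset.sum_add_distrib]
  map_smul' c x := by simp [Finset.mul_sum]

/-- `f ↦ P_F((lγ·L_H + I_S)·f)` is a bijection of `F` whose inverse has
operator norm at most `1/(lγ(1−ε)λ₁ − 1)`: for every `z` there is a unique `g ∈ F` with
`P_F((lγ·L_H + I_S)·g) = P_F z`, and `‖g‖ ≤ ‖P_F z‖/(lγ(1−ε)λ₁ − 1)`. -/
theorem stmt_4 {n : ℕ} (hn : 2 ≤ n)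
    (AG AH : Matrix (Fin n) (Fin n) ℝ)
    (hG : IsWeightedGraph AG) (hGc : GraphConnected AG)
    (hH : IsWeightedGraph AH)
    (ε : ℝ) (hε0 : 0 ≤ ε) (hε1 : ε < 1)
    (hsp : IsSparsifier (Lap AG) (Lap AH) ε)
    (γ : ℝ) (hγ : 0 < γ)
    (l : ℕ) (hl : 1 ≤ l)
    (S : Finset (Fin n))
    (lam1 : ℝ) (hlam1 : IsLam1 (Lap AG) lam1)
    (hmain : 1 < (l : ℝ) * γ * (1 - ε) * lam1) :
    ∀ z : Fin n → ℝ, ∃ g : Fin n → ℝ,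
      ((∑ i, g i = 0) ∧
        (PF n).mulVec ((((l : ℝ) * γ) • Lap AH + IS S).mulVec g) = (PF n).mulVec z ∧
        vnorm g ≤ vnorm ((PF n).mulVec z) / ((l : ℝ) * γ * (1 - ε) * lam1 - 1)) ∧
      ∀ g' : Fin n → ℝ,
        (∑ i, g' i = 0) ∧
          (PF n).mulVec ((((l : ℝ) * γ) • Lap AH + IS S).mulVec g') = (PF n).mulVec z →
        g' = g := by
  have hnpos : 0 < n := lt_of_lt_of_le (by norm_num) hn
  have hnne : (n:ℝ) ≠ 0 := Nat.cast_ne_zero.mpr hnpos.ne'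
  set c : ℝ := (l : ℝ) * γ * (1 - ε) * lam1 with hc
  set M : Matrix (Fin n) (Fin n) ℝ := ((l : ℝ) * γ) • Lap AH + IS S with hM
  have hlγ : 0 < (l:ℝ) * γ := by
    have : (1:ℝ) ≤ (l:ℝ) := by exact_mod_cast hl
    nlinarith
  -- coercivity
  have key : ∀ g : Fin n → ℝ, (∑ i, g i = 0) → c * (∑ i, (g i)^2) ≤ g ⬝ᵥ M.mulVec g := by
    intro g hg
    have hIS : 0 ≤ g ⬝ᵥ (IS S).mulVec g := by
      rw [IS, dotProduct]
      refine Finset.sum_nonneg fun i _ => ?_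
      rw [Matrix.mulVec_diagonal]
      by_cases hi : i ∈ S <;> simp [hi, mul_self_nonneg]
    have hexp : g ⬝ᵥ M.mulVec g
        = ((l:ℝ) * γ) * (g ⬝ᵥ (Lap AH).mulVec g) + g ⬝ᵥ (IS S).mulVec g := by
      rw [hM, Matrix.add_mulVec, dotProduct_add, Matrix.smul_mulVec,
        dotProduct_smul, smul_eq_mul]
    by_cases hg0 : g = 0
    · simp [hg0, hexp]
    · have hs : 0 < ∑ i, (g i)^2 := by
        obtain ⟨i, hi⟩ := Function.ne_iff.mp hg0
        refine Finset.sum_pos' (fun j _ => sq_nonneg _) ⟨i, Finset.mem_univ i, ?_⟩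
        have : g i ≠ 0 := hi
        positivity
      have hq : lam1 ≤ (g ⬝ᵥ (Lap AG).mulVec g) / (∑ i, (g i)^2) :=
        hlam1.2 ⟨g, hg0, hg, rfl⟩
      have h1 : lam1 * (∑ i, (g i)^2) ≤ g ⬝ᵥ (Lap AG).mulVec g := by
        rw [← le_div_iff₀ hs] at *; exact hq
      have h2 : (1 - ε) * (g ⬝ᵥ (Lap AG).mulVec g) ≤ g ⬝ᵥ (Lap AH).mulVec g :=
        (hsp g).1
      have hcoef : 0 ≤ (l:ℝ) * γ * (1 - ε) := by nlinarith
      calc c * (∑ i, (g i)^2) = ((l:ℝ) * γ * (1 - ε)) * (lam1 * ∑ i, (g i)^2) := by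
            rw [hc]; ring
        _ ≤ ((l:ℝ) * γ * (1 - ε)) * (g ⬝ᵥ (Lap AG).mulVec g) :=
            mul_le_mul_of_nonneg_left h1 hcoef
        _ = ((l:ℝ) * γ) * ((1 - ε) * (g ⬝ᵥ (Lap AG).mulVec g)) := by ring
        _ ≤ ((l:ℝ) * γ) * (g ⬝ᵥ (Lap AH).mulVec g) :=
            mul_le_mul_of_nonneg_left h2 hlγ.le
        _ ≤ g ⬝ᵥ M.mulVec g := by rw [hexp]; linarith
  have hcpos : 0 < c := lt_trans one_pos hmain
  -- injectivity on F
  have inj : ∀ g : Fin n → ℝ, (∑ i, g i = 0) →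
      (PF n).mulVec (M.mulVec g) = 0 → g = 0 := by
    intro g hg h0
    have : g ⬝ᵥ (PF n).mulVec (M.mulVec g) = 0 := by rw [h0]; simp
    rw [dot_PF hg] at this
    have hle := key g hg
    rw [this] at hle
    have hs0 : ∑ i, (g i)^2 ≤ 0 := by nlinarith
    have hs : ∑ i, (g i)^2 = 0 :=
      le_antisymm hs0 (Finset.sum_nonneg fun i _ => sq_nonneg _)
    funext i
    have := (Finset.sum_eq_zero_iff_of_nonneg (fun i _ => sq_nonneg (g i))).mp hs
      i (Finset.mem_univ i)
    exact pow_eq_zero_iff (by norm_num) |>.mp this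
  -- set up linear algebra
  set Fsub : Submodule ℝ (Fin n → ℝ) := LinearMap.ker (sumLM n) with hF
  have hmem : ∀ x : Fin n → ℝ, x ∈ Fsub ↔ ∑ i, x i = 0 := fun x => Iff.rfl
  set φ : (Fin n → ℝ) →ₗ[ℝ] (Fin n → ℝ) := Matrix.mulVecLin (PF n * M) with hφ
  have hmaps : ∀ x ∈ Fsub, φ x ∈ Fsub := by
    intro x _
    rw [hmem, hφ, Matrix.mulVecLin_apply, ← Matrix.mulVec_mulVec]
    exact sum_PF hnne _
  set ψ : Fsub →ₗ[ℝ] Fsub := φ.restrict hmaps with hψ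
  have hψinj : Function.Injective ψ := by
    rw [← LinearMap.ker_eq_bot]
    rw [LinearMap.ker_eq_bot']
    intro m hm
    have h1 : φ (m : Fin n → ℝ) = 0 := by
      have := congrArg (Subtype.val) hm
      simpa [hψ, LinearMap.restrict_apply] using this
    have : (m : Fin n → ℝ) = 0 := by
      apply inj _ ((hmem _).mp m.2)
      rw [Matrix.mulVec_mulVec]
      simpa [hφ, Matrix.mulVecLin_apply] using h1
    exact Subtype.ext this
  have hψsurj : Function.Surjective ψ :=
    (LinearMap.injective_iff_surjective).mp hψinj
  intro z
  obtain ⟨gs, hgs⟩ := hψsurj ⟨(PF n).mulVec z, (hmem _).mpr (sum_PF hnne z)⟩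
  set g : Fin n → ℝ := (gs : Fin n → ℝ) with hgdef
  have hgsum : ∑ i, g i = 0 := (hmem _).mp gs.2
  have heq : (PF n).mulVec (M.mulVec g) = (PF n).mulVec z := by
    have := congrArg (Subtype.val) hgs
    rw [Matrix.mulVec_mulVec]
    simpa [hψ, LinearMap.restrict_apply, hφ, Matrix.mulVecLin_apply] using this
  -- norm bound
  have hnb : vnorm g ≤ vnorm ((PF n).mulVec z) / (c - 1) := by
    have h1 : c * (∑ i, (g i)^2) ≤ g ⬝ᵥ (PF n).mulVec z := by
      rw [← heq, dot_PF hgsum]; exact key g hgsum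
    have h2 : g ⬝ᵥ (PF n).mulVec z ≤ vnorm g * vnorm ((PF n).mulVec z) := by
      rw [dotProduct, vnorm, vnorm]
      exact Real.sum_mul_le_sqrt_mul_sqrt _ _ _
    have hvg : 0 ≤ vnorm g := Real.sqrt_nonneg _
    have hvz : 0 ≤ vnorm ((PF n).mulVec z) := Real.sqrt_nonneg _
    have hsq : vnorm g ^ 2 = ∑ i, (g i)^2 :=
      Real.sq_sqrt (Finset.sum_nonneg fun i _ => sq_nonneg _)
    have h3 : c * vnorm g ^ 2 ≤ vnorm g * vnorm ((PF n).mulVec z) := by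
      rw [hsq]; linarith
    rcases hvg.eq_or_lt with h | h
    · rw [← h]; exact div_nonneg hvz (by linarith)
    · rw [le_div_iff₀ (by linarith : (0:ℝ) < c - 1)]
      have e : vnorm g * (c * vnorm g) = c * vnorm g ^ 2 := by ring
      have h4' : vnorm g * (c * vnorm g) ≤ vnorm g * vnorm ((PF n).mulVec z) := by
        rw [e]; exact h3
      have h4 : c * vnorm g ≤ vnorm ((PF n).mulVec z) := (mul_le_mul_iff_of_pos_left h).mp h4'
      have e2 : vnorm g * (c - 1) = c * vnorm g - vnorm g := by ring
      rw [e2]; linarith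
  refine ⟨g, ⟨hgsum, heq, hnb⟩, ?_⟩
  intro g' ⟨hg'sum, hg'eq⟩
  have hd : g' - g = 0 := by
    apply inj
    · simp only [Pi.sub_apply]
      rw [Finset.sum_sub_distrib, hgsum, hg'sum]; ring
    · rw [Matrix.mulVec_sub, Matrix.mulVec_sub, hg'eq, heq, sub_self]
  exact sub_eq_zero.mp hd
end
end

section
/- Let G be a connected weighted graph on n ≥ 2 vertices with Laplacian L_G, and let H be a weighted graph on the same vertices whose Laplacian L_H makes it a (1±ε)-spectral sparsifier of G with 0 ≤ ε < 1. Let γ > 0, 1 ≤ l ≤ n−1, let y ∈ ℝⁿ satisfy |y_i| ≤ k for all i, assume lγ(1−ε)λ₁ > 1, and let S, S' be two size-l subsets of {1,…,n} differing in exactly one element. Let g ∈ F be the unique solution of P_F((lγ·L_H + I_S)·g) = P_F(y_{S'}) and g' ∈ F the unique solution of P_F((lγ·L_H + I_{S'})·g') = P_F(y_{S'}). Then ‖g − g'‖₂ ≤ 1.5·k·√l/(lγ(1−ε)λ₁ − 1)². -/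
open Matrix BigOperators Finset
open scoped Classical

noncomputable section

lemma pf_mulVec_apply {n : ℕ} (v : Fin n → ℝ) (i : Fin n) :
    (PF n).mulVec v i = v i - (n:ℝ)⁻¹ * ∑ j, v j := by
  rw [PF, Matrix.sub_mulVec, Pi.sub_apply, Matrix.one_mulVec]
  congr 1
  simp [Matrix.mulVec, dotProduct, Matrix.smul_apply, ← Finset.mul_sum]

lemma dot_pf {n : ℕ} (x v : Fin n → ℝ) (hx : ∑ i, x i = 0) :
    x ⬝ᵥ (PF n).mulVec v = x ⬝ᵥ v := by
  simp only [dotProduct, pf_mulVec_apply, mul_sub]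
  rw [Finset.sum_sub_distrib]
  simp [← Finset.sum_mul, hx]

lemma vnorm_nonneg {n : ℕ} (x : Fin n → ℝ) : 0 ≤ vnorm x := Real.sqrt_nonneg _

lemma vnorm_sq {n : ℕ} (x : Fin n → ℝ) : (vnorm x) ^ 2 = ∑ i, x i ^ 2 := by
  rw [vnorm, Real.sq_sqrt]; positivity

lemma abs_dot_le {n : ℕ} (f g : Fin n → ℝ) : |f ⬝ᵥ g| ≤ vnorm f * vnorm g := by
  have h := Finset.sum_mul_sq_le_sq_mul_sq Finset.univ f g
  rw [← Real.sqrt_sq_eq_abs, vnorm, vnorm, ← Real.sqrt_mul (by positivity)]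
  exact Real.sqrt_le_sqrt h

lemma vnorm_mono {n : ℕ} (f g : Fin n → ℝ) (h : ∀ i, f i ^ 2 ≤ g i ^ 2) :
    vnorm f ≤ vnorm g := by
  exact Real.sqrt_le_sqrt (Finset.sum_le_sum fun i _ => h i)

set_option maxHeartbeats 1000000 in
/-- the term `‖A⁻¹y_{S'} − B⁻¹y_{S'}‖` in the stability proof is bounded by
`1.5·k·√l/(lγ(1−ε)λ₁ − 1)²`. -/
theorem stmt_5 {n : ℕ} (hn : 2 ≤ n)
    (AG AH : Matrix (Fin n) (Fin n) ℝ)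
    (hG : IsWeightedGraph AG) (hGc : GraphConnected AG)
    (hH : IsWeightedGraph AH)
    (ε : ℝ) (hε0 : 0 ≤ ε) (hε1 : ε < 1)
    (hsp : IsSparsifier (Lap AG) (Lap AH) ε)
    (γ : ℝ) (hγ : 0 < γ)
    (l : ℕ) (hl : 1 ≤ l) (hln : l ≤ n - 1)
    (y : Fin n → ℝ) (k : ℝ) (hy : ∀ i, |y i| ≤ k)
    (lam1 : ℝ) (hlam1 : IsLam1 (Lap AG) lam1)
    (hmain : 1 < (l : ℝ) * γ * (1 - ε) * lam1)
    (S S' : Finset (Fin n)) (hS : S.card = l) (hS' : S'.card = l)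
    (hdiff : (S \ S').card = 1) (hdiff' : (S' \ S).card = 1)
    (g g' : Fin n → ℝ)
    (hg : (∑ i, g i = 0) ∧
      (PF n).mulVec ((((l : ℝ) * γ) • Lap AH + IS S).mulVec g) =
        (PF n).mulVec ((IS S').mulVec y))
    (hg' : (∑ i, g' i = 0) ∧
      (PF n).mulVec ((((l : ℝ) * γ) • Lap AH + IS S').mulVec g') =
        (PF n).mulVec ((IS S').mulVec y)) :
    vnorm (g - g') ≤ 1.5 * k * Real.sqrt l / ((l : ℝ) * γ * (1 - ε) * lam1 - 1) ^ 2 := by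
  obtain ⟨hgF, hgEq⟩ := hg
  obtain ⟨hgF', hgEq'⟩ := hg'
  set c : ℝ := (l : ℝ) * γ * (1 - ε) * lam1 with hcdef
  have hc1 : 1 < c := hmain
  have hc0 : 0 < c := lt_trans one_pos hc1
  have hlγ : 0 ≤ (l : ℝ) * γ := by positivity
  have hk0 : 0 ≤ k := le_trans (abs_nonneg _) (hy ⟨0, by omega⟩)
  have hε' : 0 ≤ 1 - ε := by linarith
  -- quadratic lower bound
  have quad : ∀ (T : Finset (Fin n)) (x : Fin n → ℝ), (∑ i, x i = 0) →
      c * ∑ i, x i ^ 2 ≤ x ⬝ᵥ ((((l : ℝ) * γ) • Lap AH + IS T).mulVec x) := by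
    intro T x hx
    have hLG : lam1 * ∑ i, x i ^ 2 ≤ x ⬝ᵥ (Lap AG).mulVec x := by
      by_cases hx0 : x = 0
      · simp [hx0]
      · have hpos : 0 < ∑ i, x i ^ 2 := by
          obtain ⟨i, hi⟩ := Function.ne_iff.mp hx0
          exact Finset.sum_pos' (fun j _ => sq_nonneg _)
            ⟨i, Finset.mem_univ i, by simpa using sq_pos_of_ne_zero hi⟩
        have hle := hlam1.2 ⟨x, hx0, hx, rfl⟩
        calc lam1 * ∑ i, x i ^ 2
            ≤ (x ⬝ᵥ (Lap AG).mulVec x) / (∑ i, x i ^ 2) * ∑ i, x i ^ 2 :=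
              mul_le_mul_of_nonneg_right hle hpos.le
          _ = x ⬝ᵥ (Lap AG).mulVec x := div_mul_cancel₀ _ hpos.ne'
    have hLH : (1 - ε) * (x ⬝ᵥ (Lap AG).mulVec x) ≤ x ⬝ᵥ (Lap AH).mulVec x := (hsp x).1
    have hIT : 0 ≤ x ⬝ᵥ (IS T).mulVec x := by
      rw [dotProduct]
      apply Finset.sum_nonneg
      intro i _
      rw [IS, Matrix.mulVec_diagonal]
      by_cases h : i ∈ T <;> simp [h, mul_self_nonneg]
    have expand : x ⬝ᵥ ((((l : ℝ) * γ) • Lap AH + IS T).mulVec x)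
        = ((l : ℝ) * γ) * (x ⬝ᵥ (Lap AH).mulVec x) + x ⬝ᵥ (IS T).mulVec x := by
      rw [Matrix.add_mulVec, dotProduct_add, Matrix.smul_mulVec, dotProduct_smul,
        smul_eq_mul]
    have h1 : (1 - ε) * (lam1 * ∑ i, x i ^ 2) ≤ x ⬝ᵥ (Lap AH).mulVec x :=
      le_trans (mul_le_mul_of_nonneg_left hLG hε') hLH
    have h2 : ((l : ℝ) * γ) * ((1 - ε) * (lam1 * ∑ i, x i ^ 2))
        ≤ ((l : ℝ) * γ) * (x ⬝ᵥ (Lap AH).mulVec x) :=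
      mul_le_mul_of_nonneg_left h1 hlγ
    have h3 : c * ∑ i, x i ^ 2 = ((l : ℝ) * γ) * ((1 - ε) * (lam1 * ∑ i, x i ^ 2)) := by
      rw [hcdef]; ring
    rw [expand]; linarith
  set M := (((l : ℝ) * γ) • Lap AH + IS S) with hM
  set M' := (((l : ℝ) * γ) • Lap AH + IS S') with hM'
  -- bound on g'
  have e1 : g' ⬝ᵥ M'.mulVec g' = g' ⬝ᵥ (IS S').mulVec y := by
    rw [← dot_pf g' (M'.mulVec g') hgF', hgEq', dot_pf g' _ hgF']
  have hyS : vnorm ((IS S').mulVec y) ≤ k * Real.sqrt l := by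
    have hsum : ∑ i, ((IS S').mulVec y i) ^ 2 ≤ (l : ℝ) * k ^ 2 := by
      have heq : ∀ i : Fin n, ((IS S').mulVec y i) ^ 2 = (if i ∈ S' then y i ^ 2 else 0) := by
        intro i; rw [IS, Matrix.mulVec_diagonal]
        by_cases h : i ∈ S' <;> simp [h]
      rw [Finset.sum_congr rfl fun i _ => heq i, Finset.sum_ite_mem,
        Finset.univ_inter]
      calc ∑ i ∈ S', y i ^ 2 ≤ ∑ _i ∈ S', k ^ 2 := by
            apply Finset.sum_le_sum
            intro i _
            calc y i ^ 2 = |y i| ^ 2 := (sq_abs _).symm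
              _ ≤ k ^ 2 := pow_le_pow_left₀ (abs_nonneg _) (hy i) 2
        _ = (l : ℝ) * k ^ 2 := by rw [Finset.sum_const, hS']; simp [mul_comm]
    calc vnorm ((IS S').mulVec y) ≤ Real.sqrt ((l : ℝ) * k ^ 2) :=
          Real.sqrt_le_sqrt hsum
      _ = k * Real.sqrt l := by
          rw [Real.sqrt_mul (by positivity), Real.sqrt_sq hk0, mul_comm]
  have hGn : vnorm g' ≤ k * Real.sqrt l / c := by
    have h1 : c * (vnorm g') ^ 2 ≤ vnorm g' * (k * Real.sqrt l) := by
      rw [vnorm_sq]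
      calc c * ∑ i, g' i ^ 2 ≤ g' ⬝ᵥ M'.mulVec g' := quad S' g' hgF'
        _ = g' ⬝ᵥ (IS S').mulVec y := e1
        _ ≤ |g' ⬝ᵥ (IS S').mulVec y| := le_abs_self _
        _ ≤ vnorm g' * vnorm ((IS S').mulVec y) := abs_dot_le _ _
        _ ≤ vnorm g' * (k * Real.sqrt l) :=
            mul_le_mul_of_nonneg_left hyS (vnorm_nonneg _)
    rcases eq_or_lt_of_le (vnorm_nonneg g') with h0 | h0
    · rw [← h0]
      exact div_nonneg (by positivity) hc0.le
    · rw [le_div_iff₀ hc0]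
      nlinarith
  -- the difference
  set d : Fin n → ℝ := g - g' with hd
  have hdF : ∑ i, d i = 0 := by
    simp only [hd, Pi.sub_apply, Finset.sum_sub_distrib, hgF, hgF', sub_zero]
  have hMd : M.mulVec d = M.mulVec g - M'.mulVec g' + (IS S' - IS S).mulVec g' := by
    have hMM : M.mulVec g' = M'.mulVec g' - (IS S' - IS S).mulVec g' := by
      rw [← Matrix.sub_mulVec]
      congr 1
      rw [hM, hM']
      abel
    rw [hd, Matrix.mulVec_sub, hMM]
    abel
  have key : d ⬝ᵥ M.mulVec d = d ⬝ᵥ ((IS S' - IS S).mulVec g') := by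
    have h0 : (PF n).mulVec (M.mulVec d) = (PF n).mulVec ((IS S' - IS S).mulVec g') := by
      rw [hMd, Matrix.mulVec_add, Matrix.mulVec_sub, hgEq, hgEq']
      simp
    rw [← dot_pf d _ hdF, h0, dot_pf d _ hdF]
  have hvev : vnorm ((IS S' - IS S).mulVec g') ≤ vnorm g' := by
    apply vnorm_mono
    intro i
    rw [Matrix.sub_mulVec, Pi.sub_apply, IS, IS, Matrix.mulVec_diagonal,
      Matrix.mulVec_diagonal]
    by_cases h1 : i ∈ S' <;> by_cases h2 : i ∈ S <;> simp [h1, h2] <;> nlinarith [sq_nonneg (g' i)]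
  have hDn : vnorm d ≤ vnorm g' / c := by
    have h1 : c * (vnorm d) ^ 2 ≤ vnorm d * vnorm g' := by
      rw [vnorm_sq]
      calc c * ∑ i, d i ^ 2 ≤ d ⬝ᵥ M.mulVec d := quad S d hdF
        _ = d ⬝ᵥ ((IS S' - IS S).mulVec g') := key
        _ ≤ |d ⬝ᵥ ((IS S' - IS S).mulVec g')| := le_abs_self _
        _ ≤ vnorm d * vnorm ((IS S' - IS S).mulVec g') := abs_dot_le _ _
        _ ≤ vnorm d * vnorm g' := mul_le_mul_of_nonneg_left hvev (vnorm_nonneg _)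
    rcases eq_or_lt_of_le (vnorm_nonneg d) with h0 | h0
    · rw [← h0]
      exact div_nonneg (vnorm_nonneg _) hc0.le
    · rw [le_div_iff₀ hc0]
      nlinarith
  have hfinal : vnorm d ≤ k * Real.sqrt l / c ^ 2 := by
    calc vnorm d ≤ vnorm g' / c := hDn
      _ ≤ (k * Real.sqrt l / c) / c := by
          exact div_le_div_of_nonneg_right hGn hc0.le
      _ = k * Real.sqrt l / c ^ 2 := by rw [div_div, sq]
  calc vnorm d ≤ k * Real.sqrt l / c ^ 2 := hfinal
    _ ≤ 1.5 * k * Real.sqrt l / (c - 1) ^ 2 := by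
        apply div_le_div₀ (by positivity) (by nlinarith [Real.sqrt_nonneg (l:ℝ)])
          (pow_pos (by linarith) 2) (by nlinarith)
end
end

section
/- Let G be a connected weighted graph on n ≥ 2 vertices with Laplacian L_G, let γ > 0, let S be a nonempty subset of {1,…,n} of size l, and let y ∈ ℝⁿ. Then the function f ↦ (1/l)·(f − y)ᵀ·I_S·(f − y) + γ·fᵀ·L_G·f has a unique minimizer over ℝⁿ, given by f̂ = (γ·l·L_G + I_S)⁻¹·I_S·y. -/
open Matrix BigOperators Finset
open scoped Classical

noncomputable section

lemma lap_form {n : ℕ} (A : Matrix (Fin n) (Fin n) ℝ) (hA : A.IsSymm) (x : Fin n → ℝ) :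
    x ⬝ᵥ (Lap A).mulVec x = (1/2) * ∑ i, ∑ j, A i j * (x i - x j)^2 := by
  have hsymm : ∀ i j, A j i = A i j := fun i j => hA.apply i j
  have hmv : ∀ i, (Lap A).mulVec x i = (∑ j, A i j) * x i - ∑ j, A i j * x j := by
    intro i
    simp [Lap, Matrix.mulVec, dotProduct, Matrix.sub_apply, sub_mul,
      Finset.sum_sub_distrib, Matrix.diagonal_apply, ite_mul, zero_mul,
      Finset.sum_ite_eq]
  have hA1 : x ⬝ᵥ (Lap A).mulVec x
      = (∑ i, ∑ j, A i j * x i ^ 2) - ∑ i, ∑ j, A i j * (x i * x j) := by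
    rw [← Finset.sum_sub_distrib]
    simp only [dotProduct, hmv]
    refine Finset.sum_congr rfl fun i _ => ?_
    rw [mul_sub, Finset.sum_mul, Finset.mul_sum, Finset.mul_sum]
    congr 1
    · exact Finset.sum_congr rfl fun j _ => by ring
    · exact Finset.sum_congr rfl fun j _ => by ring
  have hswap : (∑ i, ∑ j, A i j * x j ^ 2) = ∑ i, ∑ j, A i j * x i ^ 2 := by
    rw [Finset.sum_comm]
    exact Finset.sum_congr rfl fun i _ => Finset.sum_congr rfl fun j _ => by rw [hsymm]
  have hexp : (∑ i, ∑ j, A i j * (x i - x j)^2)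
      = (∑ i, ∑ j, A i j * x i ^ 2) + (∑ i, ∑ j, A i j * x j ^ 2)
        - 2 * ∑ i, ∑ j, A i j * (x i * x j) := by
    rw [← Finset.sum_add_distrib, Finset.mul_sum, ← Finset.sum_sub_distrib]
    refine Finset.sum_congr rfl fun i _ => ?_
    rw [← Finset.sum_add_distrib, Finset.mul_sum, ← Finset.sum_sub_distrib]
    exact Finset.sum_congr rfl fun j _ => by ring
  rw [hA1, hexp, hswap]; ring

lemma lap_nonneg {n : ℕ} (A : Matrix (Fin n) (Fin n) ℝ) (hA : A.IsSymm)
    (hA0 : ∀ i j, 0 ≤ A i j) (x : Fin n → ℝ) : 0 ≤ x ⬝ᵥ (Lap A).mulVec x := by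
  rw [lap_form A hA x]
  have : 0 ≤ ∑ i, ∑ j : Fin n, A i j * (x i - x j)^2 :=
    Finset.sum_nonneg fun i _ => Finset.sum_nonneg fun j _ =>
      mul_nonneg (hA0 i j) (sq_nonneg _)
  linarith

lemma is_form {n : ℕ} (S : Finset (Fin n)) (x : Fin n → ℝ) :
    x ⬝ᵥ (IS S).mulVec x = ∑ i ∈ S, (x i)^2 := by
  simp only [IS, dotProduct, Matrix.mulVec_diagonal]
  rw [← Finset.sum_filter_add_sum_filter_not Finset.univ (· ∈ S)]
  simp only [Finset.filter_mem_eq_inter, Finset.univ_inter]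
  have h2 : ∑ i ∈ Finset.univ.filter (¬ · ∈ S), x i * ((if i ∈ S then (1:ℝ) else 0) * x i) = 0 := by
    refine Finset.sum_eq_zero fun i hi => ?_
    simp only [Finset.mem_filter] at hi
    simp [hi.2]
  rw [h2, add_zero]
  exact Finset.sum_congr rfl fun i hi => by simp [hi]; ring

lemma is_nonneg {n : ℕ} (S : Finset (Fin n)) (x : Fin n → ℝ) :
    0 ≤ x ⬝ᵥ (IS S).mulVec x := by
  rw [is_form]; exact Finset.sum_nonneg fun i _ => sq_nonneg _

lemma const_of_edges {n : ℕ} {A : Matrix (Fin n) (Fin n) ℝ}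
    (hGc : GraphConnected A) {x : Fin n → ℝ}
    (h : ∀ i j, 0 < A i j → x i = x j) (i j : Fin n) : x i = x j := by
  obtain ⟨w⟩ := hGc.preconnected i j
  induction w with
  | nil => rfl
  | cons hadj p ih =>
    rename_i u v w'
    have : x u = x v := by
      obtain ⟨_, h1 | h1⟩ := hadj
      · exact h _ _ h1
      · exact (h _ _ h1).symm
    exact this.trans ih

lemma lap_symm {n : ℕ} {A : Matrix (Fin n) (Fin n) ℝ} (hA : A.IsSymm) :
    (Lap A).IsSymm := by
  unfold Lap
  rw [Matrix.IsSymm, Matrix.transpose_sub, Matrix.diagonal_transpose, hA]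

lemma is_symm' {n : ℕ} (S : Finset (Fin n)) : (IS S).IsSymm := by
  unfold IS; exact Matrix.isSymm_diagonal _

lemma swap_dot {n : ℕ} {M : Matrix (Fin n) (Fin n) ℝ} (hM : M.IsSymm)
    (u v : Fin n → ℝ) : u ⬝ᵥ M.mulVec v = v ⬝ᵥ M.mulVec u := by
  rw [Matrix.dotProduct_mulVec, ← Matrix.mulVec_transpose, hM, dotProduct_comm]

section Main
variable {n : ℕ} {AG : Matrix (Fin n) (Fin n) ℝ}

lemma Mexpand {γ : ℝ} {l : ℕ} {S : Finset (Fin n)} (u v : Fin n → ℝ) :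
    u ⬝ᵥ ((γ * (l : ℝ)) • Lap AG + IS S).mulVec v
      = γ * (l : ℝ) * (u ⬝ᵥ (Lap AG).mulVec v) + u ⬝ᵥ (IS S).mulVec v := by
  rw [Matrix.add_mulVec, Matrix.smul_mulVec, dotProduct_add, dotProduct_smul]
  simp

lemma quad_zero (hG : IsWeightedGraph AG) (hGc : GraphConnected AG)
    {γ : ℝ} (hγ : 0 < γ) {S : Finset (Fin n)} (hS : S.Nonempty) {l : ℕ}
    (hl : S.card = l) (g : Fin n → ℝ)
    (h : g ⬝ᵥ ((γ * (l : ℝ)) • Lap AG + IS S).mulVec g = 0) : g = 0 := by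
  obtain ⟨hAs, hA0, -⟩ := hG
  have hlpos : 0 < (l : ℝ) := by
    have := hS.card_pos; rw [hl] at this; exact_mod_cast this
  rw [Mexpand] at h
  have h1 : 0 ≤ g ⬝ᵥ (Lap AG).mulVec g := lap_nonneg AG hAs hA0 g
  have h2 : 0 ≤ g ⬝ᵥ (IS S).mulVec g := is_nonneg S g
  have hc : 0 < γ * (l : ℝ) := mul_pos hγ hlpos
  have hL0 : g ⬝ᵥ (Lap AG).mulVec g = 0 := by nlinarith
  have hI0 : g ⬝ᵥ (IS S).mulVec g = 0 := by nlinarith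
  rw [lap_form AG hAs] at hL0
  have hsum : ∑ i, ∑ j, AG i j * (g i - g j)^2 = 0 := by linarith
  have hterm : ∀ i j, AG i j * (g i - g j)^2 = 0 := by
    intro i j
    have h4 := (Finset.sum_eq_zero_iff_of_nonneg (fun i _ =>
      Finset.sum_nonneg fun j _ => mul_nonneg (hA0 i j) (sq_nonneg _))).mp hsum i
      (Finset.mem_univ i)
    exact (Finset.sum_eq_zero_iff_of_nonneg (fun j _ =>
      mul_nonneg (hA0 i j) (sq_nonneg _))).mp h4 j (Finset.mem_univ j)
  have hedge : ∀ i j, 0 < AG i j → g i = g j := by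
    intro i j hij
    have := hterm i j
    have h5 : (g i - g j)^2 = 0 := by
      rcases mul_eq_zero.mp this with h | h
      · exact absurd h (ne_of_gt hij)
      · exact h
    have := pow_eq_zero_iff (n := 2) (by norm_num) |>.mp h5
    linarith [sub_eq_zero.mp this]
  rw [is_form] at hI0
  have hzS : ∀ i ∈ S, g i = 0 := by
    intro i hi
    have := (Finset.sum_eq_zero_iff_of_nonneg (fun i _ => sq_nonneg (g i))).mp hI0 i hi
    exact pow_eq_zero_iff (n := 2) (by norm_num) |>.mp this
  obtain ⟨i0, hi0⟩ := hS
  funext j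
  have := const_of_edges hGc hedge j i0
  rw [Pi.zero_apply, this, hzS i0 hi0]

lemma M_unit (hG : IsWeightedGraph AG) (hGc : GraphConnected AG)
    {γ : ℝ} (hγ : 0 < γ) {S : Finset (Fin n)} (hS : S.Nonempty) {l : ℕ}
    (hl : S.card = l) :
    IsUnit ((γ * (l : ℝ)) • Lap AG + IS S).det := by
  rw [isUnit_iff_ne_zero]
  intro hdet
  obtain ⟨v, hv, hMv⟩ := (Matrix.exists_mulVec_eq_zero_iff).mpr hdet
  apply hv
  apply quad_zero hG hGc hγ hS hl
  rw [hMv, dotProduct_zero]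

end Main

/-- the Laplacian-regularized least-squares objective has the unique
minimizer `f̂ = (γ·l·L_G + I_S)⁻¹·I_S·y`. -/
theorem stmt_13 {n : ℕ} (hn : 2 ≤ n)
    (AG : Matrix (Fin n) (Fin n) ℝ)
    (hG : IsWeightedGraph AG) (hGc : GraphConnected AG)
    (γ : ℝ) (hγ : 0 < γ)
    (S : Finset (Fin n)) (hS : S.Nonempty) (l : ℕ) (hl : S.card = l)
    (y : Fin n → ℝ) :
    (∀ f : Fin n → ℝ,
      (1 / (l : ℝ)) *
          ((((γ * (l : ℝ)) • Lap AG + IS S)⁻¹.mulVec ((IS S).mulVec y) - y) ⬝ᵥ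
            (IS S).mulVec
              (((γ * (l : ℝ)) • Lap AG + IS S)⁻¹.mulVec ((IS S).mulVec y) - y)) +
        γ * ((((γ * (l : ℝ)) • Lap AG + IS S)⁻¹.mulVec ((IS S).mulVec y)) ⬝ᵥ
          (Lap AG).mulVec (((γ * (l : ℝ)) • Lap AG + IS S)⁻¹.mulVec ((IS S).mulVec y))) ≤
      (1 / (l : ℝ)) * ((f - y) ⬝ᵥ (IS S).mulVec (f - y)) +
        γ * (f ⬝ᵥ (Lap AG).mulVec f)) ∧
    ∀ f : Fin n → ℝ,
      (1 / (l : ℝ)) * ((f - y) ⬝ᵥ (IS S).mulVec (f - y)) +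
          γ * (f ⬝ᵥ (Lap AG).mulVec f) =
        (1 / (l : ℝ)) *
            ((((γ * (l : ℝ)) • Lap AG + IS S)⁻¹.mulVec ((IS S).mulVec y) - y) ⬝ᵥ
              (IS S).mulVec
                (((γ * (l : ℝ)) • Lap AG + IS S)⁻¹.mulVec ((IS S).mulVec y) - y)) +
          γ * ((((γ * (l : ℝ)) • Lap AG + IS S)⁻¹.mulVec ((IS S).mulVec y)) ⬝ᵥ
            (Lap AG).mulVec
              (((γ * (l : ℝ)) • Lap AG + IS S)⁻¹.mulVec ((IS S).mulVec y))) →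
      f = ((γ * (l : ℝ)) • Lap AG + IS S)⁻¹.mulVec ((IS S).mulVec y) := by
  have hAs := hG.1
  have hA0 := hG.2.1
  have hlpos : 0 < (l : ℝ) := by
    have := hS.card_pos; rw [hl] at this; exact_mod_cast this
  set M : Matrix (Fin n) (Fin n) ℝ := (γ * (l : ℝ)) • Lap AG + IS S with hMdef
  set fh : Fin n → ℝ := M⁻¹.mulVec ((IS S).mulVec y) with hfhdef
  have hunit : IsUnit M.det := M_unit hG hGc hγ hS hl
  have hMf : M.mulVec fh = (IS S).mulVec y := by
    rw [hfhdef, Matrix.mulVec_mulVec, Matrix.mul_nonsing_inv _ hunit, Matrix.one_mulVec]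
  have hLsym : (Lap AG).IsSymm := lap_symm hAs
  have hIsym : (IS S).IsSymm := is_symm' S
  have hMsym : M.IsSymm := by
    rw [Matrix.IsSymm, hMdef, Matrix.transpose_add, Matrix.transpose_smul, hLsym, hIsym]
  have hcon : ∀ v : Fin n → ℝ,
      γ * (l : ℝ) * (v ⬝ᵥ (Lap AG).mulVec fh) + v ⬝ᵥ (IS S).mulVec fh
        = v ⬝ᵥ (IS S).mulVec y := by
    intro v
    rw [← Mexpand, ← hMdef, hMf]
  have expand_sub : ∀ (N : Matrix (Fin n) (Fin n) ℝ), N.IsSymm → ∀ u v : Fin n → ℝ,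
      (u - v) ⬝ᵥ N.mulVec (u - v)
        = u ⬝ᵥ N.mulVec u - 2 * (u ⬝ᵥ N.mulVec v) + v ⬝ᵥ N.mulVec v := by
    intro N hN u v
    rw [Matrix.mulVec_sub, dotProduct_sub, sub_dotProduct, sub_dotProduct, swap_dot hN v u]
    ring
  have key : ∀ f : Fin n → ℝ,
      (1 / (l : ℝ)) * ((f - y) ⬝ᵥ (IS S).mulVec (f - y)) + γ * (f ⬝ᵥ (Lap AG).mulVec f)
        = (1 / (l : ℝ)) * ((f - fh) ⬝ᵥ M.mulVec (f - fh))
          + ((1 / (l : ℝ)) * ((fh - y) ⬝ᵥ (IS S).mulVec (fh - y))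
             + γ * (fh ⬝ᵥ (Lap AG).mulVec fh)) := by
    intro f
    rw [expand_sub _ hIsym f y, expand_sub _ hMsym f fh, expand_sub _ hIsym fh y,
      hMdef, Mexpand, Mexpand, Mexpand]
    have hll : (l : ℝ) * (l : ℝ)⁻¹ = 1 := mul_inv_cancel₀ (ne_of_gt hlpos)
    linear_combination (2 / (l : ℝ)) * hcon f - (2 / (l : ℝ)) * hcon fh
      + (γ * (fh ⬝ᵥ (Lap AG).mulVec fh) - γ * (f ⬝ᵥ (Lap AG).mulVec f)) * hll
  constructor
  · intro f
    have hk := key f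
    have hq : 0 ≤ (f - fh) ⬝ᵥ M.mulVec (f - fh) := by
      rw [hMdef, Mexpand]
      have h1 := lap_nonneg AG hAs hA0 (f - fh)
      have h2 := is_nonneg S (f - fh)
      have h3 : 0 ≤ γ * (l : ℝ) * ((f - fh) ⬝ᵥ (Lap AG).mulVec (f - fh)) :=
        mul_nonneg (le_of_lt (mul_pos hγ hlpos)) h1
      linarith
    rw [hk]
    have : 0 ≤ (1 / (l : ℝ)) * ((f - fh) ⬝ᵥ M.mulVec (f - fh)) :=
      mul_nonneg (by positivity) hq
    linarith
  · intro f heq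
    have hk := key f
    rw [heq] at hk
    have hq0 : (f - fh) ⬝ᵥ M.mulVec (f - fh) = 0 := by
      have h1 : (1 / (l : ℝ)) * ((f - fh) ⬝ᵥ M.mulVec (f - fh)) = 0 := by linarith
      have hlne : (1 / (l : ℝ)) ≠ 0 := by positivity
      exact (mul_eq_zero.mp h1).resolve_left hlne
    have := quad_zero hG hGc hγ hS hl (f - fh) (by rw [← hMdef]; exact hq0)
    have := sub_eq_zero.mp this
    exact this
end
end
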